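/- Let n, m, j be positive integers with gcd(n,m) = 1. Then the number of (n,m)-Dyck paths with exactly j peaks equals (1/j)·binomial(n−1, j−1)·binomial(m−1, j−1); equivalently, j times the number of (n,m)-Dyck paths with exactly j peaks equals binomial(n−1, j−1)·binomial(m−1, j−1). -/

import Mathlib

/-- A free `(n,m)`-path: a word over `{U, D}` (here `true` = `U` = step `(0,1)`,
`false` = `D` = step `(1,0)`) with exactly `m` letters `U` and `n` letters `D`. -/
def IsFreePath (n m : ℕ) (w : List Bool) : Prop :=
  w.count true = m ∧ w.count false = n

/-- An `(n,m)`-Dyck path: a free `(n,m)`-path that never goes below the line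
`y = (m/n)x`, i.e. every prefix with `u` letters `U` and `d` letters `D`
satisfies `n·u ≥ m·d`. -/
def IsDyckPath (n m : ℕ) (w : List Bool) : Prop :=
  IsFreePath n m w ∧ ∀ p : List Bool, p <+: w → m * p.count false ≤ n * p.count true

/-- There is a peak (the factor `UD`) starting at position `i` of `w`. -/
def IsPeakAt (w : List Bool) (i : ℕ) : Prop :=
  [true, false] <+: w.drop i

/-- The number of peaks of a word `w`. -/
noncomputable def numPeaks (w : List Bool) : ℕ :=
  {i : ℕ | IsPeakAt w i}.ncard

open List

/-- recursive peak counter -/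
def pk : List Bool → ℕ
  | [] => 0
  | x :: t => pk t + (if [true, false] <+: (x :: t) then 1 else 0)

lemma peak_set_finite (w : List Bool) : {i : ℕ | IsPeakAt w i}.Finite := by
  apply Set.Finite.subset (Set.finite_Iio w.length)
  intro i hi
  simp only [Set.mem_setOf_eq, IsPeakAt] at hi
  have h2 := hi.length_le
  simp only [List.length_drop, List.length_cons, List.length_singleton] at h2
  simp only [Set.mem_Iio]
  omega

lemma isPeakAt_succ (x : Bool) (t : List Bool) (i : ℕ) :
    IsPeakAt (x :: t) (i + 1) ↔ IsPeakAt t i := by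
  simp [IsPeakAt]

lemma numPeaks_nil : numPeaks [] = 0 := by
  simp [numPeaks, IsPeakAt]

lemma numPeaks_cons (x : Bool) (t : List Bool) :
    numPeaks (x :: t) = numPeaks t + (if [true, false] <+: (x :: t) then 1 else 0) := by
  have hset : {i : ℕ | IsPeakAt (x :: t) i} =
      (if [true, false] <+: (x :: t) then insert 0 ((· + 1) '' {i | IsPeakAt t i})
        else ((· + 1) '' {i | IsPeakAt t i})) := by
    ext i
    rcases i with _ | i
    · by_cases hp : [true, false] <+: (x :: t) <;>
        simp [hp, IsPeakAt]
    · rw [Set.mem_setOf_eq, isPeakAt_succ]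
      by_cases hp : [true, false] <+: (x :: t) <;> simp [hp]
  have hinj : Function.Injective (· + 1 : ℕ → ℕ) := fun a b h => by simpa using h
  by_cases hp : [true, false] <+: (x :: t)
  · rw [numPeaks, hset, if_pos hp, Set.ncard_insert_of_notMem (by simp)
      (((peak_set_finite t).image _))]
    rw [Set.ncard_image_of_injective _ hinj, if_pos hp, numPeaks]
  · rw [numPeaks, hset, if_neg hp, Set.ncard_image_of_injective _ hinj, if_neg hp, numPeaks]
    omega

lemma numPeaks_eq_pk (w : List Bool) : numPeaks w = pk w := by
  induction w with
  | nil => simpa [pk] using numPeaks_nil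
  | cons x t ih => rw [numPeaks_cons, ih]; rfl

def blk (p : ℕ × ℕ) : List Bool := List.replicate p.1 true ++ List.replicate p.2 false

def wrd (L : List (ℕ × ℕ)) : List Bool := (L.map blk).flatten

@[simp] lemma wrd_nil : wrd [] = [] := rfl

@[simp] lemma wrd_cons (p : ℕ × ℕ) (T : List (ℕ × ℕ)) :
    wrd (p :: T) = List.replicate p.1 true ++ (List.replicate p.2 false ++ wrd T) := by
  simp [wrd, blk]

lemma wrd_append (A B : List (ℕ × ℕ)) : wrd (A ++ B) = wrd A ++ wrd B := by
  simp [wrd]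

@[simp] lemma count_true_wrd (L : List (ℕ × ℕ)) :
    (wrd L).count true = (L.map Prod.fst).sum := by
  induction L with
  | nil => rfl
  | cons p T ih => simp [List.count_append, ih, List.count_replicate]

@[simp] lemma count_false_wrd (L : List (ℕ × ℕ)) :
    (wrd L).count false = (L.map Prod.snd).sum := by
  induction L with
  | nil => rfl
  | cons p T ih => simp [List.count_append, ih, List.count_replicate]

/-- helper: prefix of an append -/
lemma prefix_append_cases {α : Type*} {p l r : List α} (h : p <+: l ++ r) :
    p <+: l ∨ ∃ q, q <+: r ∧ p = l ++ q := by
  rcases le_or_gt p.length l.length with hle | hlt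
  · left
    rw [prefix_iff_eq_take] at h
    rw [h, take_append_of_le_length hle]
    exact take_prefix _ _
  · right
    obtain ⟨s, hs⟩ := h
    refine ⟨p.drop l.length, ⟨s, ?_⟩, ?_⟩
    · have := congrArg (List.drop l.length) hs
      rwa [drop_append_of_le_length (by omega), drop_left] at this
    · have h2 : take l.length p = l := by
        have := congrArg (List.take l.length) hs
        rwa [take_append_of_le_length (by omega), take_left] at this
      nth_rewrite 1 [(take_append_drop l.length p).symm]
      rw [h2]

lemma prefix_replicate {α : Type*} {p : List α} {k : ℕ} {c : α} (h : p <+: List.replicate k c) :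
    p = List.replicate p.length c ∧ p.length ≤ k := by
  constructor
  · exact eq_replicate_length.mpr fun b hb => eq_of_mem_replicate (h.subset hb)
  · simpa using h.length_le

/-! pk on block words -/

lemma prefixUD_iff (x y : Bool) (r : List Bool) :
    [true, false] <+: (x :: y :: r) ↔ x = true ∧ y = false := by
  constructor
  · intro h
    obtain ⟨s, hs⟩ := h
    simp only [List.cons_append, List.nil_append, List.cons.injEq] at hs
    tauto
  · rintro ⟨rfl, rfl⟩
    exact ⟨r, rfl⟩

lemma pk_cons_cons (x y : Bool) (r : List Bool) :
    pk (x :: y :: r) = pk (y :: r) + (if x = true ∧ y = false then 1 else 0) := by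
  rw [pk]
  congr 1
  by_cases h : x = true ∧ y = false
  · rw [if_pos ((prefixUD_iff x y r).mpr h), if_pos h]
  · rw [if_neg (fun hc => h ((prefixUD_iff x y r).mp hc)), if_neg h]

@[simp] lemma pk_false_cons (l : List Bool) : pk (false :: l) = pk l := by
  cases l with
  | nil => simp [pk]
  | cons y r => rw [pk_cons_cons]; simp

lemma pk_rep_false (a : ℕ) (l : List Bool) :
    pk (List.replicate a false ++ l) = pk l := by
  induction a with
  | zero => simp
  | succ k ih => rw [List.replicate_succ, List.cons_append, pk_false_cons, ih]

lemma pk_rep_true_false (b : ℕ) (hb : 0 < b) (l : List Bool) :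
    pk (List.replicate b true ++ (false :: l)) = pk l + 1 := by
  induction b with
  | zero => omega
  | succ k ih =>
    rcases Nat.eq_zero_or_pos k with rfl | hk
    · rw [List.replicate_succ]
      simp only [List.replicate_zero, List.cons_append, List.nil_append]
      rw [pk_cons_cons]
      simp
    · rw [List.replicate_succ, List.cons_append]
      have hk1 : List.replicate k true ++ (false :: l) = true :: (List.replicate (k-1) true ++ (false :: l)) := by
        rcases k with _ | k'
        · omega
        · simp [List.replicate_succ]
      rw [hk1] at ih ⊢
      rw [pk_cons_cons]
      simpa using ih hk

lemma pk_wrd (L : List (ℕ × ℕ)) (hpos : ∀ x ∈ L, 0 < x.1 ∧ 0 < x.2) :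
    pk (wrd L) = L.length := by
  induction L with
  | nil => simp [pk]
  | cons p T ih =>
    obtain ⟨hb, ha⟩ := hpos p (by simp)
    rw [wrd_cons]
    have ha' : List.replicate p.2 false ++ wrd T = false :: (List.replicate (p.2 - 1) false ++ wrd T) := by
      rcases hp : p.2 with _ | a'
      · omega
      · simp [List.replicate_succ]
    rw [ha', pk_rep_true_false p.1 hb, pk_rep_false]
    rw [ih (fun x hx => hpos x (by simp [hx]))]
    simp

/-! injectivity of wrd on positive lists -/

lemma rep_head_ne {α : Type*} {b : ℕ} {c d : α} {X Y : List α} (hb : 0 < b)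
    (h : List.replicate b c ++ X = d :: Y) : c = d := by
  rcases b with _ | b'
  · omega
  · rw [List.replicate_succ, List.cons_append] at h
    exact (List.cons.injEq _ _ _ _).mp h |>.1

lemma wrd_head_true {L : List (ℕ × ℕ)} (hpos : ∀ x ∈ L, 0 < x.1 ∧ 0 < x.2)
    (hne : wrd L ≠ []) : ∃ t, wrd L = true :: t := by
  cases L with
  | nil => simp at hne
  | cons p T =>
    obtain ⟨hb, _⟩ := hpos p (by simp)
    rw [wrd_cons]
    rcases hp : p.1 with _ | b'
    · omega
    · rw [List.replicate_succ]
      exact ⟨_, rfl⟩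

lemma rep_cancel {α : Type*} {b1 b2 : ℕ} {c : α} {X Y : List α}
    (hXc : ∀ t, X ≠ c :: t) (hYc : ∀ t, Y ≠ c :: t)
    (h : List.replicate b1 c ++ X = List.replicate b2 c ++ Y) : b1 = b2 ∧ X = Y := by
  have key : ∀ {b1 b2 : ℕ} {X Y : List α}, (∀ t, X ≠ c :: t) → b1 < b2 →
      List.replicate b1 c ++ X = List.replicate b2 c ++ Y → False := by
    intro b1 b2 X Y hX hlt h
    have hrep : List.replicate b2 c = List.replicate b1 c ++ List.replicate (b2 - b1) c := by
      rw [← List.replicate_add]; congr 1; omega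
    rw [hrep, List.append_assoc] at h
    have h2 := List.append_cancel_left h
    rcases hb2 : b2 - b1 with _ | k
    · omega
    · rw [hb2, List.replicate_succ, List.cons_append] at h2
      exact hX _ h2
  have hb : b1 = b2 := by
    by_contra hne
    rcases Nat.lt_or_ge b1 b2 with hlt | hge
    · exact key hXc hlt h
    · exact key hYc (by omega) h.symm
  subst hb
  exact ⟨rfl, List.append_cancel_left h⟩

lemma wrd_injOn : ∀ (L1 L2 : List (ℕ × ℕ)), (∀ x ∈ L1, 0 < x.1 ∧ 0 < x.2) →
    (∀ x ∈ L2, 0 < x.1 ∧ 0 < x.2) → wrd L1 = wrd L2 → L1 = L2 := by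
  intro L1
  induction L1 with
  | nil =>
    intro L2 _ hp2 h
    cases L2 with
    | nil => rfl
    | cons p T =>
      obtain ⟨hb, _⟩ := hp2 p (by simp)
      exfalso
      have : wrd (p :: T) ≠ [] := by
        obtain ⟨t, ht⟩ := wrd_head_true hp2 (by
          rw [wrd_cons]
          rcases hp : p.1 with _ | b'
          · omega
          · rw [List.replicate_succ]; simp)
        rw [ht]; simp
      exact this (by rw [← h]; rfl)
  | cons p T ih =>
    intro L2 hp1 hp2 h
    cases L2 with
    | nil =>
      exfalso
      obtain ⟨hb, _⟩ := hp1 p (by simp)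
      have : wrd (p :: T) = [] := by rw [h]; rfl
      rw [wrd_cons] at this
      rcases hp : p.1 with _ | b'
      · omega
      · rw [hp, List.replicate_succ] at this; simp at this
    | cons q S =>
      obtain ⟨hb1, ha1⟩ := hp1 p (by simp)
      obtain ⟨hb2, ha2⟩ := hp2 q (by simp)
      rw [wrd_cons, wrd_cons] at h
      -- cancel the true-blocks
      have hD1 : ∀ t, (List.replicate p.2 false ++ wrd T) ≠ (true : Bool) :: t := by
        intro t ht
        have := rep_head_ne ha1 ht
        simp at this
      have hD2 : ∀ t, (List.replicate q.2 false ++ wrd S) ≠ (true : Bool) :: t := by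
        intro t ht
        have := rep_head_ne ha2 ht
        simp at this
      obtain ⟨hb, hrest⟩ := rep_cancel hD1 hD2 h
      -- cancel the false-blocks
      have hU1 : ∀ t, wrd T ≠ (false : Bool) :: t := by
        intro t ht
        have hne : wrd T ≠ [] := by rw [ht]; simp
        obtain ⟨t', ht'⟩ := wrd_head_true (fun x hx => hp1 x (by simp [hx])) hne
        rw [ht'] at ht
        simp at ht
      have hU2 : ∀ t, wrd S ≠ (false : Bool) :: t := by
        intro t ht
        have hne : wrd S ≠ [] := by rw [ht]; simp
        obtain ⟨t', ht'⟩ := wrd_head_true (fun x hx => hp2 x (by simp [hx])) hne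
        rw [ht'] at ht
        simp at ht
      obtain ⟨ha, hrest2⟩ := rep_cancel hU1 hU2 hrest
      have := ih S (fun x hx => hp1 x (by simp [hx])) (fun x hx => hp2 x (by simp [hx])) hrest2
      rw [this]
      congr 1
      exact Prod.ext hb ha

/-! decomposition existence -/

lemma takeWhile_rep {w : List Bool} : w.takeWhile id = List.replicate (w.takeWhile id).length true := by
  apply List.eq_replicate_length.mpr
  intro b hb
  simpa using List.mem_takeWhile_imp hb

lemma takeWhile_rep_neg {w : List Bool} :
    w.takeWhile (fun x => !x) = List.replicate (w.takeWhile (fun x => !x)).length false := by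
  apply List.eq_replicate_length.mpr
  intro b hb
  simpa using List.mem_takeWhile_imp hb

lemma exists_decomp : ∀ (N : ℕ) (w : List Bool), w.length ≤ N →
    w.head? ≠ some false → w.getLast? ≠ some true →
    ∃ L, (∀ x ∈ L, 0 < x.1 ∧ 0 < x.2) ∧ wrd L = w := by
  intro N
  induction N with
  | zero =>
    intro w hw _ _
    have : w = [] := List.length_eq_zero_iff.mp (by omega)
    exact ⟨[], by simp, by simp [this]⟩
  | succ N ih =>
    intro w hw hhead hlast
    cases hwc : w with
    | nil => exact ⟨[], by simp, by simp⟩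
    | cons x t =>
      subst hwc
      have hx : x = true := by
        cases x
        · simp at hhead
        · rfl
      subst hx
      set tW := (true :: t).takeWhile id with htW
      set dW := (true :: t).dropWhile id with hdW
      have hsplit : tW ++ dW = true :: t := List.takeWhile_append_dropWhile
      set b := tW.length with hbdef
      have htWr : tW = List.replicate b true := takeWhile_rep
      have hb : 0 < b := by
        rw [hbdef, htW, List.takeWhile_cons_of_pos (by simp)]
        simp
      cases hdWc : dW with
      | nil =>
        exfalso
        rw [hdWc] at hsplit
        rw [List.append_nil] at hsplit
        rw [← hsplit, htWr] at hlast
        rw [List.getLast?_replicate] at hlast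
        simp only [ne_eq] at hlast
        rcases Nat.eq_zero_or_pos b with h0 | h0
        · omega
        · exact hlast (by rw [if_neg (by omega)])
      | cons y t2 =>
        have hy : y = false := by
          have := List.head?_dropWhile_not id (true :: t)
          rw [← hdW, hdWc] at this
          simpa using this
        subst hy
        set tW2 := dW.takeWhile (fun x => !x) with htW2
        set dW2 := dW.dropWhile (fun x => !x) with hdW2
        have hsplit2 : tW2 ++ dW2 = dW := List.takeWhile_append_dropWhile
        set a := tW2.length with hadef
        have htW2r : tW2 = List.replicate a false := takeWhile_rep_neg
        have ha : 0 < a := by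
          rw [hadef, htW2, hdWc, List.takeWhile_cons_of_pos (by simp)]
          simp
        -- dW2 head not false
        have hdw2head : dW2.head? ≠ some false := by
          intro hc
          cases hdW2c : dW2 with
          | nil => rw [hdW2c] at hc; simp at hc
          | cons z t3 =>
            have := List.head?_dropWhile_not (fun x => !x) dW
            rw [← hdW2, hdW2c] at this
            rw [hdW2c] at hc
            simp only [List.head?_cons, Option.some.injEq] at hc
            subst hc
            simpa using this
        -- dW2 getLast not true
        have hdw2last : dW2.getLast? ≠ some true := by
          intro hc
          have hne : dW2 ≠ [] := by intro h0; rw [h0] at hc; simp at hc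
          have : (true :: t).getLast? = dW2.getLast? := by
            rw [← hsplit, ← hsplit2]
            rw [← List.append_assoc, List.getLast?_append]
            cases hgl : dW2.getLast? with
            | none => exact absurd (List.getLast?_eq_none_iff.mp hgl) hne
            | some z => simp
          exact hlast (this ▸ hc)
        -- lengths
        have hlen : dW2.length + 1 ≤ N := by
          have h1 : tW.length + dW.length = t.length + 1 := by
            rw [← List.length_append, hsplit]; simp
          have h2 : tW2.length + dW2.length = dW.length := by
            rw [← List.length_append, hsplit2]
          simp only [List.length_cons] at hw
          omega
        obtain ⟨L2, hL2pos, hL2⟩ := ih dW2 (by omega) hdw2head hdw2last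
        refine ⟨(b, a) :: L2, ?_, ?_⟩
        · intro x hx
          rcases List.mem_cons.mp hx with rfl | hx2
          · exact ⟨hb, ha⟩
          · exact hL2pos x hx2
        · rw [wrd_cons]
          simp only
          rw [hL2, ← htWr, ← htW2r, hsplit2, hsplit]

/-! Dyck condition from boundary conditions -/

def bdryL (n m : ℕ) (L : List (ℕ × ℕ)) : Prop :=
  ∀ k, m * ((L.take k).map Prod.snd).sum ≤ n * ((L.take k).map Prod.fst).sum

lemma count_true_rep_false (a : ℕ) : (List.replicate a false).count true = 0 := by
  simp [List.count_replicate]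

lemma count_false_rep_true (b : ℕ) : (List.replicate b true).count false = 0 := by
  simp [List.count_replicate]

lemma dyck_of_bdry (n m : ℕ) : ∀ (L : List (ℕ × ℕ)) (u0 d0 : ℕ),
    (m * d0 ≤ n * u0) →
    (∀ k, m * (d0 + ((L.take k).map Prod.snd).sum) ≤ n * (u0 + ((L.take k).map Prod.fst).sum)) →
    ∀ p, p <+: wrd L → m * (d0 + p.count false) ≤ n * (u0 + p.count true) := by
  intro L
  induction L with
  | nil =>
    intro u0 d0 h0 _ p hp
    have : p = [] := List.prefix_nil.mp (by simpa using hp)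
    subst this
    simpa using h0
  | cons q T ih =>
    intro u0 d0 h0 hb p hp
    rw [wrd_cons] at hp
    have hb1 := hb 1
    simp only [List.take_succ_cons, List.take_zero, List.map_cons, List.map_nil, List.sum_cons,
      List.sum_nil, add_zero] at hb1
    rcases prefix_append_cases hp with hcase | ⟨r, hr, rfl⟩
    · -- p within the true-block
      obtain ⟨hrep, hlen⟩ := prefix_replicate hcase
      rw [hrep]
      simp only [List.count_replicate]
      norm_num
      calc m * d0 ≤ n * u0 := h0
        _ ≤ n * (u0 + p.length) := by apply Nat.mul_le_mul_left; omega
    · rcases prefix_append_cases hr with hcase2 | ⟨s, hs, rfl⟩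
      · -- within the false-block
        obtain ⟨hrep, hlen⟩ := prefix_replicate hcase2
        rw [hrep]
        simp only [List.count_append, List.count_replicate]
        norm_num
        calc m * (d0 + r.length) ≤ m * (d0 + q.2) := by apply Nat.mul_le_mul_left; omega
          _ ≤ n * (u0 + q.1) := hb1
      · -- p = trueblock ++ falseblock ++ s with s prefix of wrd T
        have key := ih (u0 + q.1) (d0 + q.2) hb1 (fun k => by
          have := hb (k + 1)
          simp only [List.take_succ_cons, List.map_cons, List.sum_cons] at this
          calc m * (d0 + q.2 + ((List.map Prod.snd (T.take k)).sum))
              = m * (d0 + (q.2 + (List.map Prod.snd (T.take k)).sum)) := by ring_nf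
            _ ≤ n * (u0 + (q.1 + (List.map Prod.fst (T.take k)).sum)) := this
            _ = n * (u0 + q.1 + (List.map Prod.fst (T.take k)).sum) := by ring_nf) s hs
        simp only [List.count_append, List.count_replicate]
        norm_num
        calc m * (d0 + (q.2 + s.count false)) = m * (d0 + q.2 + s.count false) := by ring_nf
          _ ≤ n * (u0 + q.1 + s.count true) := key
          _ = n * (u0 + (q.1 + s.count true)) := by ring_nf

/-! Dyck words: head and last -/

lemma dyck_head {n m : ℕ} {w : List Bool} (hm : 0 < m) (hd : IsDyckPath n m w) :
    w.head? ≠ some false := by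
  intro hc
  cases w with
  | nil => simp at hc
  | cons x t =>
    simp only [List.head?_cons, Option.some.injEq] at hc
    subst hc
    have := hd.2 [false] ⟨t, rfl⟩
    simp at this
    omega

lemma dyck_last {n m : ℕ} {w : List Bool} (hn : 0 < n) (hm : 0 < m)
    (hd : IsDyckPath n m w) : w.getLast? ≠ some true := by
  intro hc
  have hne : w ≠ [] := by intro h0; rw [h0] at hc; simp at hc
  have hgl : w.getLast hne = true := by
    rw [List.getLast?_eq_getLast hne] at hc
    exact Option.some.inj hc
  have hsplit : w.dropLast ++ [true] = w := by
    nth_rewrite 2 [← List.dropLast_append_getLast hne]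
    rw [hgl]
  have hpref : w.dropLast <+: w := ⟨[true], hsplit⟩
  have h1 := hd.2 w.dropLast hpref
  have hct : w.count true = w.dropLast.count true + 1 := by
    rw [← hsplit, List.count_append]
    simp
  have hcf : w.count false = w.dropLast.count false := by
    rw [← hsplit, List.count_append]
    simp
  have h2 := hd.1.1
  have h3 := hd.1.2
  rw [h2] at hct
  rw [h3] at hcf
  rw [← hcf] at h1
  have hct' : List.count true w.dropLast = m - 1 := by omega
  rw [hct', Nat.mul_comm m n] at h1
  have hx : n * (m - 1) + n * 1 = n * m := by rw [← Nat.mul_add]; congr 1; omega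
  have hnn : 0 < n * 1 := by omega
  linarith

/-! the main word-set / block-set correspondence -/

def SL (n m j : ℕ) : Set (List (ℕ × ℕ)) :=
  {L | (∀ x ∈ L, 0 < x.1 ∧ 0 < x.2) ∧ L.length = j ∧ (L.map Prod.fst).sum = m ∧
    (L.map Prod.snd).sum = n ∧ bdryL n m L}

lemma wset_eq_image (n m j : ℕ) (hn : 0 < n) (hm : 0 < m) :
    {w : List Bool | IsDyckPath n m w ∧ numPeaks w = j} = wrd '' SL n m j := by
  ext w
  simp only [Set.mem_setOf_eq, Set.mem_image]
  constructor
  · rintro ⟨hd, hpk⟩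
    obtain ⟨L, hLpos, hLw⟩ := exists_decomp w.length w le_rfl (dyck_head hm hd) (dyck_last hn hm hd)
    refine ⟨L, ⟨hLpos, ?_, ?_, ?_, ?_⟩, hLw⟩
    · rw [← hpk, ← hLw, numPeaks_eq_pk, pk_wrd L hLpos]
    · rw [← hd.1.1, ← hLw, count_true_wrd]
    · rw [← hd.1.2, ← hLw, count_false_wrd]
    · intro k
      have hsplit : wrd (L.take k) ++ wrd (L.drop k) = wrd L := by
        rw [← wrd_append, List.take_append_drop]
      have hpref : wrd (L.take k) <+: w := by
        rw [← hLw]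
        exact ⟨wrd (L.drop k), hsplit⟩
      have := hd.2 _ hpref
      rwa [count_true_wrd, count_false_wrd] at this
  · rintro ⟨L, ⟨hLpos, hLlen, hLm, hLn, hLb⟩, rfl⟩
    refine ⟨⟨⟨?_, ?_⟩, ?_⟩, ?_⟩
    · rw [count_true_wrd]; exact hLm
    · rw [count_false_wrd]; exact hLn
    · intro p hp
      have := dyck_of_bdry n m L 0 0 (by simp) (fun k => by simpa using hLb k) p hp
      simpa using this
    · rw [numPeaks_eq_pk, pk_wrd L hLpos, hLlen]

lemma wset_ncard (n m j : ℕ) (hn : 0 < n) (hm : 0 < m) :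
    {w : List Bool | IsDyckPath n m w ∧ numPeaks w = j}.ncard = (SL n m j).ncard := by
  rw [wset_eq_image n m j hn hm]
  exact Set.ncard_image_of_injOn (fun L1 h1 L2 h2 h => wrd_injOn L1 L2 h1.1 h2.1 h)

/-! ### cyclic rotation machinery on tuples -/

section Cyc

variable {j : ℕ}

def idx (hj : 0 < j) (x : ℕ) : Fin j := ⟨x % j, Nat.mod_lt x hj⟩

lemma idx_small (hj : 0 < j) {x : ℕ} (hx : x < j) : idx hj x = ⟨x, hx⟩ := by
  simp [idx, Nat.mod_eq_of_lt hx]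

lemma idx_add_j (hj : 0 < j) (x : ℕ) : idx hj (x + j) = idx hj x := by
  simp [idx, Nat.add_mod_right]

lemma idx_mod_add (hj : 0 < j) (x t : ℕ) : idx hj (x % j + t) = idx hj (x + t) := by
  simp [idx, Nat.mod_add_mod]

lemma idx_mod (hj : 0 < j) (x : ℕ) : idx hj (x % j) = idx hj x := by
  simpa using idx_mod_add hj x 0

def rotT (hj : 0 < j) (t : ℕ) (g : Fin j → ℕ × ℕ) : Fin j → ℕ × ℕ :=
  fun i => g (idx hj (i.val + t))

lemma rotT_zero (hj : 0 < j) (g : Fin j → ℕ × ℕ) : rotT hj 0 g = g := by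
  funext i
  simp [rotT, idx_small hj i.isLt]

lemma rotT_rotT (hj : 0 < j) (s t : ℕ) (g : Fin j → ℕ × ℕ) :
    rotT hj s (rotT hj t g) = rotT hj (s + t) g := by
  funext i
  show g (idx hj ((idx hj (i.val + s)).val + t)) = g (idx hj (i.val + (s + t)))
  have : (idx hj (i.val + s)).val = (i.val + s) % j := rfl
  rw [this, idx_mod_add hj, ← Nat.add_assoc]

lemma rotT_mod (hj : 0 < j) (t : ℕ) (g : Fin j → ℕ × ℕ) :
    rotT hj (t % j) g = rotT hj t g := by
  funext i
  show g (idx hj (i.val + t % j)) = g (idx hj (i.val + t))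
  rw [Nat.add_comm i.val (t % j), idx_mod_add hj, Nat.add_comm]

def PB (hj : 0 < j) (g : Fin j → ℕ × ℕ) (k : ℕ) : ℕ :=
  ∑ i ∈ Finset.range k, (g (idx hj i)).1

def PA (hj : 0 < j) (g : Fin j → ℕ × ℕ) (k : ℕ) : ℕ :=
  ∑ i ∈ Finset.range k, (g (idx hj i)).2

def Hf (n m : ℕ) (hj : 0 < j) (g : Fin j → ℕ × ℕ) (k : ℕ) : ℤ :=
  (n : ℤ) * PB hj g k - (m : ℤ) * PA hj g k

/-- sums of a periodic function over a window of length `j` are translation invariant -/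
lemma window_sum (hj : 0 < j) (F : ℕ → ℕ) (hper : ∀ x, F (x + j) = F x) (k : ℕ) :
    ∑ i ∈ Finset.range j, F (k + i) = ∑ i ∈ Finset.range j, F i := by
  induction k with
  | zero => simp
  | succ k ih =>
    rw [← ih]
    obtain ⟨j', rfl⟩ : ∃ j', j = j' + 1 := ⟨j - 1, by omega⟩
    rw [Finset.sum_range_succ' (fun i => F (k + i)) j', Finset.sum_range_succ]
    have h1 : ∀ i, F (k + 1 + i) = F (k + (i + 1)) := fun i => by ring_nf
    have h2 : F (k + (j' + 1)) = F (k + 0) := by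
      rw [show k + (j' + 1) = (k + 0) + (j' + 1) by ring, hper]
    simp only [h1, h2]

end Cyc

section CycMain

variable {n m j : ℕ}

lemma per_true (hj : 0 < j) (g : Fin j → ℕ × ℕ) : ∀ x, (g (idx hj (x + j))).1 = (g (idx hj x)).1 :=
  fun x => by rw [idx_add_j]

lemma PB_add (hj : 0 < j) (g : Fin j → ℕ × ℕ) (k l : ℕ) :
    PB hj g (k + l) = PB hj g k + ∑ i ∈ Finset.range l, (g (idx hj (k + i))).1 :=
  Finset.sum_range_add _ k l

lemma PA_add (hj : 0 < j) (g : Fin j → ℕ × ℕ) (k l : ℕ) :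
    PA hj g (k + l) = PA hj g k + ∑ i ∈ Finset.range l, (g (idx hj (k + i))).2 :=
  Finset.sum_range_add _ k l

lemma PB_fin (hj : 0 < j) (g : Fin j → ℕ × ℕ) :
    PB hj g j = ∑ i : Fin j, (g i).1 := by
  rw [PB, ← Fin.sum_univ_eq_sum_range (fun x => (g (idx hj x)).1) j]
  apply Finset.sum_congr rfl
  intro i _
  rw [idx_small hj i.isLt]

lemma PA_fin (hj : 0 < j) (g : Fin j → ℕ × ℕ) :
    PA hj g j = ∑ i : Fin j, (g i).2 := by
  rw [PA, ← Fin.sum_univ_eq_sum_range (fun x => (g (idx hj x)).2) j]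
  apply Finset.sum_congr rfl
  intro i _
  rw [idx_small hj i.isLt]

/-- the conditions on tuples -/
def TTc (m n : ℕ) {j : ℕ} (g : Fin j → ℕ × ℕ) : Prop :=
  (∀ i, 0 < (g i).1 ∧ 0 < (g i).2) ∧ (∑ i, (g i).1) = m ∧ (∑ i, (g i).2) = n

/-- boundary Dyck condition on tuples -/
def dyckT (n m : ℕ) (hj : 0 < j) (g : Fin j → ℕ × ℕ) : Prop :=
  ∀ k ≤ j, m * PA hj g k ≤ n * PB hj g k

lemma window_B (hj : 0 < j) {g : Fin j → ℕ × ℕ} (hg : TTc m n g) (k : ℕ) :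
    ∑ i ∈ Finset.range j, (g (idx hj (k + i))).1 = m := by
  have h := window_sum hj (fun x => (g (idx hj x)).1) (per_true hj g) k
  rw [h, ← PB, PB_fin hj g, hg.2.1]

lemma window_A (hj : 0 < j) {g : Fin j → ℕ × ℕ} (hg : TTc m n g) (k : ℕ) :
    ∑ i ∈ Finset.range j, (g (idx hj (k + i))).2 = n := by
  have hper : ∀ x, (g (idx hj (x + j))).2 = (g (idx hj x)).2 := fun x => by rw [idx_add_j]
  have h := window_sum hj (fun x => (g (idx hj x)).2) hper k
  rw [h, ← PA, PA_fin hj g, hg.2.2]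

lemma PB_per (hj : 0 < j) {g : Fin j → ℕ × ℕ} (hg : TTc m n g) (k : ℕ) :
    PB hj g (k + j) = PB hj g k + m := by rw [PB_add, window_B hj hg]

lemma PA_per (hj : 0 < j) {g : Fin j → ℕ × ℕ} (hg : TTc m n g) (k : ℕ) :
    PA hj g (k + j) = PA hj g k + n := by rw [PA_add, window_A hj hg]

lemma Hf_per (hj : 0 < j) {g : Fin j → ℕ × ℕ} (hg : TTc m n g) (k : ℕ) :
    Hf n m hj g (k + j) = Hf n m hj g k := by
  rw [Hf, Hf, PB_per hj hg, PA_per hj hg]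
  push_cast
  ring

lemma Hf_mod (hj : 0 < j) {g : Fin j → ℕ × ℕ} (hg : TTc m n g) (k : ℕ) :
    Hf n m hj g k = Hf n m hj g (k % j) := by
  induction k using Nat.strong_induction_on with
  | _ k ih =>
    rcases Nat.lt_or_ge k j with h | h
    · rw [Nat.mod_eq_of_lt h]
    · have h1 : k = (k - j) + j := by omega
      calc Hf n m hj g k = Hf n m hj g ((k - j) + j) := by rw [← h1]
        _ = Hf n m hj g (k - j) := Hf_per hj hg _
        _ = Hf n m hj g ((k - j) % j) := ih _ (by omega)
        _ = Hf n m hj g (k % j) := by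
            congr 1
            conv_rhs => rw [h1]
            rw [Nat.add_mod_right]

/-- rotated partial sums -/
lemma PB_rot (hj : 0 < j) (g : Fin j → ℕ × ℕ) (t k : ℕ) :
    PB hj g (t + k) = PB hj g t + PB hj (rotT hj t g) k := by
  rw [PB_add]
  congr 1
  apply Finset.sum_congr rfl
  intro i _
  show (g (idx hj (t + i))).1 = (g (idx hj ((idx hj i).val + t))).1
  have : (idx hj i).val = i % j := rfl
  rw [this, idx_mod_add hj, Nat.add_comm i t]

lemma PA_rot (hj : 0 < j) (g : Fin j → ℕ × ℕ) (t k : ℕ) :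
    PA hj g (t + k) = PA hj g t + PA hj (rotT hj t g) k := by
  rw [PA_add]
  congr 1
  apply Finset.sum_congr rfl
  intro i _
  show (g (idx hj (t + i))).2 = (g (idx hj ((idx hj i).val + t))).2
  have : (idx hj i).val = i % j := rfl
  rw [this, idx_mod_add hj, Nat.add_comm i t]

lemma dyckT_rot_iff (hj : 0 < j) (g : Fin j → ℕ × ℕ) (t : ℕ) :
    dyckT n m hj (rotT hj t g) ↔ ∀ k ≤ j, Hf n m hj g t ≤ Hf n m hj g (t + k) := by
  have key : ∀ k, (m * PA hj (rotT hj t g) k ≤ n * PB hj (rotT hj t g) k ↔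
      Hf n m hj g t ≤ Hf n m hj g (t + k)) := by
    intro k
    rw [Hf, Hf, PB_rot hj g t k, PA_rot hj g t k]
    push_cast
    constructor
    · intro h
      have : (m : ℤ) * PA hj (rotT hj t g) k ≤ (n : ℤ) * PB hj (rotT hj t g) k := by
        exact_mod_cast h
      linarith
    · intro h
      have : (m : ℤ) * PA hj (rotT hj t g) k ≤ (n : ℤ) * PB hj (rotT hj t g) k := by linarith
      exact_mod_cast this
  constructor
  · intro h k hk
    exact (key k).mp (h k hk)
  · intro h k hk
    exact (key k).mpr (h k hk)

/-- distinctness of the H-values (uses coprimality) -/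
lemma Hf_ne (hj : 0 < j) (hcop : Nat.gcd n m = 1) {g : Fin j → ℕ × ℕ} (hg : TTc m n g)
    {t1 t2 : ℕ} (h1 : t1 < t2) (h2 : t2 - t1 < j) :
    Hf n m hj g t1 ≠ Hf n m hj g t2 := by
  intro heq
  set d := t2 - t1 with hd
  have ht2 : t2 = t1 + d := by omega
  -- Y = sum of the a-parts over the window
  set Y := ∑ i ∈ Finset.range d, (g (idx hj (t1 + i))).2 with hY
  set X := ∑ i ∈ Finset.range d, (g (idx hj (t1 + i))).1 with hX
  have hPB : PB hj g t2 = PB hj g t1 + X := by rw [ht2, PB_add]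
  have hPA : PA hj g t2 = PA hj g t1 + Y := by rw [ht2, PA_add]
  have hnm : (n : ℤ) * X = (m : ℤ) * Y := by
    rw [Hf, Hf, hPB, hPA] at heq
    push_cast at heq
    linarith
  have hnmN : n * X = m * Y := by exact_mod_cast hnm
  -- n divides Y
  have hdvd : n ∣ Y := (show Nat.Coprime n m from hcop).dvd_of_dvd_mul_left ⟨X, hnmN.symm⟩
  -- bounds on Y
  have hYlow : d ≤ Y := by
    have := Finset.card_nsmul_le_sum (Finset.range d) (fun i => (g (idx hj (t1 + i))).2) 1
      (fun x _ => (hg.1 _).2)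
    simpa using this
  have hYhigh : Y < n := by
    have hsplit : ∑ i ∈ Finset.range j, (g (idx hj (t1 + i))).2 = n := window_A hj hg t1
    have hsplit2 : ∑ i ∈ Finset.range (d + (j - d)), (g (idx hj (t1 + i))).2 = n := by
      rw [show d + (j - d) = j by omega]
      exact hsplit
    rw [Finset.sum_range_add] at hsplit2
    have hrest : j - d ≤ ∑ i ∈ Finset.range (j - d), (g (idx hj (t1 + (d + i)))).2 := by
      have := Finset.card_nsmul_le_sum (Finset.range (j - d))
        (fun i => (g (idx hj (t1 + (d + i)))).2) 1 (fun x _ => (hg.1 _).2)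
      simpa using this
    have hdpos : 0 < j - d := by omega
    have hYeq : Y = ∑ i ∈ Finset.range d, (g (idx hj (t1 + i))).2 := hY
    omega
  have : n ≤ Y := Nat.le_of_dvd (by omega) hdvd
  omega

end CycMain

section CycMain2

variable {n m j : ℕ}

/-- existence and uniqueness of the Dyck rotation -/
lemma exists_unique_dyck_rot (hj : 0 < j) (hcop : Nat.gcd n m = 1)
    {g : Fin j → ℕ × ℕ} (hg : TTc m n g) :
    ∃! t, t < j ∧ dyckT n m hj (rotT hj t g) := by
  obtain ⟨t0, ht0mem, ht0min⟩ := Finset.exists_min_image (Finset.range j)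
    (Hf n m hj g) ⟨0, by simp [hj]⟩
  have ht0 : t0 < j := Finset.mem_range.mp ht0mem
  have hmin : ∀ s, Hf n m hj g t0 ≤ Hf n m hj g s := by
    intro s
    rw [Hf_mod hj hg s]
    exact ht0min _ (Finset.mem_range.mpr (Nat.mod_lt s hj))
  refine ⟨t0, ⟨ht0, (dyckT_rot_iff hj g t0).mpr fun k _ => hmin (t0 + k)⟩, ?_⟩
  rintro t ⟨ht, hdyck⟩
  by_contra hne
  have hd := (dyckT_rot_iff hj g t).mp hdyck
  rcases Nat.lt_or_ge t t0 with hlt | hge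
  · -- t < t0 : H t ≤ H t0  and H t0 ≤ H t
    have h1 : Hf n m hj g t ≤ Hf n m hj g t0 := by
      have := hd (t0 - t) (by omega)
      rwa [show t + (t0 - t) = t0 by omega] at this
    have h2 : Hf n m hj g t0 ≤ Hf n m hj g t := hmin t
    exact Hf_ne hj hcop hg hlt (by omega) (le_antisymm h1 h2)
  · have hlt : t0 < t := by omega
    have h1 : Hf n m hj g t0 ≤ Hf n m hj g t := hmin t
    have h2 : Hf n m hj g t ≤ Hf n m hj g t0 := by
      have := hd (j - (t - t0)) (by omega)
      rw [show t + (j - (t - t0)) = t0 + j by omega, Hf_per hj hg] at this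
      exact this
    exact Hf_ne hj hcop hg hlt (by omega) (le_antisymm h1 h2)

/-- rotation preserves the tuple conditions -/
lemma TTc_rot (hj : 0 < j) {g : Fin j → ℕ × ℕ} (hg : TTc m n g) (t : ℕ) :
    TTc m n (rotT hj t g) := by
  refine ⟨fun i => hg.1 _, ?_, ?_⟩
  · have h1 : ∑ i : Fin j, (rotT hj t g i).1 = ∑ i ∈ Finset.range j, (g (idx hj (t + i))).1 := by
      rw [← Fin.sum_univ_eq_sum_range (fun x => (g (idx hj (t + x))).1) j]
      apply Finset.sum_congr rfl
      intro i _
      show (g (idx hj (i.val + t))).1 = _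
      rw [Nat.add_comm]
    rw [h1, window_B hj hg]
  · have h1 : ∑ i : Fin j, (rotT hj t g i).2 = ∑ i ∈ Finset.range j, (g (idx hj (t + i))).2 := by
      rw [← Fin.sum_univ_eq_sum_range (fun x => (g (idx hj (t + x))).2) j]
      apply Finset.sum_congr rfl
      intro i _
      show (g (idx hj (i.val + t))).2 = _
      rw [Nat.add_comm]
    rw [h1, window_A hj hg]

/-- distinct rotations of a tuple in `TTc` are distinct -/
lemma rot_injective (hj : 0 < j) (hcop : Nat.gcd n m = 1) {g : Fin j → ℕ × ℕ} (hg : TTc m n g)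
    {t1 t2 : ℕ} (h1 : t1 < j) (h2 : t2 < j) (heq : rotT hj t1 g = rotT hj t2 g) : t1 = t2 := by
  by_contra hne
  -- wlog t1 < t2
  wlog hlt : t1 < t2 generalizing t1 t2
  · exact this h2 h1 heq.symm (fun h => hne h.symm) (by omega)
  set d := t2 - t1 with hd
  -- g(idx(x + t1)) = g(idx(x + t2)) for all x : ℕ
  have hshift : ∀ x : ℕ, g (idx hj (x + t1)) = g (idx hj (x + t2)) := by
    intro x
    have := congrFun heq (idx hj x)
    show g (idx hj (x + t1)) = g (idx hj (x + t2))
    have hv : (idx hj x).val = x % j := rfl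
    simpa [rotT, hv, idx_mod_add hj] using this
  -- increments are d-periodic beyond t1
  have hper : ∀ y : ℕ, g (idx hj (t1 + y + d)) = g (idx hj (t1 + y)) := by
    intro y
    have := hshift y
    rw [show y + t2 = t1 + y + d by omega, show y + t1 = t1 + y by omega] at this
    exact this.symm
  -- Hf increments: Hf (k+1) = Hf k + c k
  have hstep : ∀ k : ℕ, Hf n m hj g (k + 1) = Hf n m hj g k +
      ((n : ℤ) * (g (idx hj k)).1 - (m : ℤ) * (g (idx hj k)).2) := by
    intro k
    rw [Hf, Hf, PB, PA, Finset.sum_range_succ, Finset.sum_range_succ, ← PB, ← PA]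
    push_cast
    ring
  -- the difference over a shift by d is constant beyond t1
  have hdiff : ∀ x : ℕ, Hf n m hj g (t1 + x + d) - Hf n m hj g (t1 + x) =
      Hf n m hj g (t1 + d) - Hf n m hj g t1 := by
    intro x
    induction x with
    | zero => simp
    | succ x ih =>
      have e1 : t1 + (x + 1) + d = (t1 + x + d) + 1 := by omega
      have e2 : t1 + (x + 1) = (t1 + x) + 1 := by omega
      rw [e1, e2, hstep, hstep, hper x]
      linarith [ih]
  -- iterate: Hf (t1 + s*d) = Hf t1 + s * delta
  set delta := Hf n m hj g (t1 + d) - Hf n m hj g t1 with hdelta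
  have hiter : ∀ s : ℕ, Hf n m hj g (t1 + s * d) = Hf n m hj g t1 + s * delta := by
    intro s
    induction s with
    | zero => simp
    | succ s ih =>
      have e1 : t1 + (s + 1) * d = (t1 + s * d) + d := by ring
      have := hdiff (s * d)
      rw [show t1 + s * d + d = t1 + (s+1) * d by ring] at this
      push_cast
      linarith [ih, this]
  -- but Hf (t1 + j*d) = Hf t1 by periodicity
  have hper2 : Hf n m hj g (t1 + j * d) = Hf n m hj g t1 := by
    rw [Hf_mod hj hg (t1 + j * d), Hf_mod hj hg t1]
    congr 1
    conv_lhs => rw [Nat.mul_comm j d, Nat.add_mul_mod_self_right]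
  have hj0 : (j : ℤ) ≠ 0 := by exact_mod_cast Nat.pos_iff_ne_zero.mp hj
  have hdelta0 : delta = 0 := by
    have := hiter j
    rw [hper2] at this
    have : (j : ℤ) * delta = 0 := by linarith
    rcases mul_eq_zero.mp this with h | h
    · exact absurd h hj0
    · exact h
  -- contradiction with distinctness
  have : Hf n m hj g t1 = Hf n m hj g (t1 + d) := by
    rw [hdelta] at hdelta0
    linarith
  exact Hf_ne hj hcop hg (show t1 < t1 + d by omega) (by omega) this

end CycMain2

section Fiber

variable {n m j : ℕ}

open scoped Classical in
noncomputable def dyckRot (n m : ℕ) {j : ℕ} (hj : 0 < j) (g : Fin j → ℕ × ℕ) : Fin j → ℕ × ℕ :=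
  if h : ∃ t, t < j ∧ dyckT n m hj (rotT hj t g) then rotT hj h.choose g else g

lemma dyckRot_spec (hj : 0 < j) (hcop : Nat.gcd n m = 1) {g : Fin j → ℕ × ℕ} (hg : TTc m n g) :
    ∃ t, t < j ∧ dyckT n m hj (rotT hj t g) ∧ dyckRot n m hj g = rotT hj t g := by
  obtain ⟨t, ⟨ht, hd⟩, _⟩ := exists_unique_dyck_rot hj hcop hg
  have hex : ∃ t, t < j ∧ dyckT n m hj (rotT hj t g) := ⟨t, ht, hd⟩
  refine ⟨hex.choose, hex.choose_spec.1, hex.choose_spec.2, ?_⟩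
  rw [dyckRot]
  rw [dif_pos hex]

lemma dyck_unique_zero (hj : 0 < j) (hcop : Nat.gcd n m = 1) {q : Fin j → ℕ × ℕ}
    (hq : TTc m n q) (hdq : dyckT n m hj q) {t : ℕ} (ht : t < j)
    (hd : dyckT n m hj (rotT hj t q)) : t = 0 := by
  obtain ⟨u, _, huniq⟩ := exists_unique_dyck_rot hj hcop hq
  have h1 : t = u := huniq t ⟨ht, hd⟩
  have h2 : (0 : ℕ) = u := huniq 0 ⟨hj, by rwa [rotT_zero]⟩
  omega

lemma dyckRot_fiber (hj : 0 < j) (hcop : Nat.gcd n m = 1) {q : Fin j → ℕ × ℕ}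
    (hq : TTc m n q) (hdq : dyckT n m hj q) {g : Fin j → ℕ × ℕ} (hg : TTc m n g) :
    dyckRot n m hj g = q ↔ ∃ t, t < j ∧ g = rotT hj t q := by
  constructor
  · intro h
    obtain ⟨t, ht, _, heq⟩ := dyckRot_spec hj hcop hg
    rw [heq] at h
    refine ⟨(j - t) % j, Nat.mod_lt _ hj, ?_⟩
    rw [rotT_mod, ← h, rotT_rotT, show j - t + t = j by omega, ← rotT_mod hj j g]
    rw [Nat.mod_self, rotT_zero]
  · rintro ⟨t, ht, rfl⟩
    obtain ⟨s, hs, hds, heq⟩ := dyckRot_spec hj hcop hg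
    rw [heq, rotT_rotT]
    have h1 : rotT hj (s + t) q = rotT hj ((s + t) % j) q := (rotT_mod hj _ q).symm
    have h2 : (s + t) % j = 0 := by
      apply dyck_unique_zero hj hcop hq hdq (Nat.mod_lt _ hj)
      rw [rotT_mod]
      rw [← rotT_rotT hj s t q]
      exact hds
    rw [h1, h2, rotT_zero]

def TTset (m n j : ℕ) : Set (Fin j → ℕ × ℕ) := {g | TTc m n g}

def TDset (n m : ℕ) {j : ℕ} (hj : 0 < j) : Set (Fin j → ℕ × ℕ) :=
  {g | TTc m n g ∧ dyckT n m hj g}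

lemma TTset_finite (m n j : ℕ) : (TTset m n j).Finite := by
  apply Set.Finite.subset (Set.Finite.pi (fun _ : Fin j =>
    Set.Finite.prod (Set.finite_Iic m) (Set.finite_Iic n)))
  intro g hg
  simp only [Set.mem_pi, Set.mem_univ, forall_true_left]
  intro i
  constructor
  · simp only [Set.mem_Iic]
    rw [← hg.2.1]
    exact Finset.single_le_sum (f := fun i => (g i).1) (fun _ _ => Nat.zero_le _)
      (Finset.mem_univ i)
  · simp only [Set.mem_Iic]
    rw [← hg.2.2]
    exact Finset.single_le_sum (f := fun i => (g i).2) (fun _ _ => Nat.zero_le _)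
      (Finset.mem_univ i)

lemma ncard_TT_eq (hj : 0 < j) (hcop : Nat.gcd n m = 1) :
    (TTset m n j).ncard = (TDset n m hj).ncard * j := by
  classical
  have hfinT : (TTset m n j).Finite := TTset_finite m n j
  have hfinD : (TDset n m hj).Finite := hfinT.subset (fun g hg => hg.1)
  rw [Set.ncard_eq_toFinset_card _ hfinT, Set.ncard_eq_toFinset_card _ hfinD]
  rw [Finset.card_eq_sum_card_fiberwise (f := dyckRot n m hj) (t := hfinD.toFinset) ?hmem]
  case hmem =>
    intro g hg
    have hgT : TTc m n g := by
      have := (Set.Finite.mem_toFinset hfinT).mp hg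
      exact this
    obtain ⟨t, ht, hd, heq⟩ := dyckRot_spec hj hcop hgT
    rw [Finset.mem_coe, Set.Finite.mem_toFinset]
    exact ⟨by rw [heq]; exact TTc_rot hj hgT t, by rw [heq]; exact hd⟩
  have hfib : ∀ q ∈ hfinD.toFinset,
      (hfinT.toFinset.filter (fun g => dyckRot n m hj g = q)).card = j := by
    intro q hqmem
    obtain ⟨hqT, hqD⟩ := (Set.Finite.mem_toFinset hfinD).mp hqmem
    have hset : hfinT.toFinset.filter (fun g => dyckRot n m hj g = q) =
        (Finset.range j).image (fun t => rotT hj t q) := by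
      ext g
      simp only [Finset.mem_filter, Finset.mem_image, Finset.mem_range,
        Set.Finite.mem_toFinset]
      constructor
      · rintro ⟨hgT, hrot⟩
        obtain ⟨t, ht, rfl⟩ := (dyckRot_fiber hj hcop hqT hqD hgT).mp hrot
        exact ⟨t, ht, rfl⟩
      · rintro ⟨t, ht, rfl⟩
        have hgT : TTc m n (rotT hj t q) := TTc_rot hj hqT t
        exact ⟨hgT, (dyckRot_fiber hj hcop hqT hqD hgT).mpr ⟨t, ht, rfl⟩⟩
    rw [hset, Finset.card_image_of_injOn (fun t1 h1 t2 h2 h =>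
      rot_injective hj hcop hqT (Finset.mem_range.mp h1) (Finset.mem_range.mp h2) h)]
    exact Finset.card_range j
  rw [Finset.sum_congr rfl hfib, Finset.sum_const, smul_eq_mul, Nat.mul_comm]

end Fiber

section Bridge

variable {n m j : ℕ}

lemma sum_map_take_ofFn_fst (hj : 0 < j) (g : Fin j → ℕ × ℕ) :
    ∀ k, k ≤ j → (((List.ofFn g).take k).map Prod.fst).sum = PB hj g k := by
  intro k
  induction k with
  | zero => simp [PB]
  | succ k ih =>
    intro hk
    rw [List.take_succ]
    have hget : (List.ofFn g)[k]? = some (g ⟨k, by omega⟩) := by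
      rw [List.getElem?_ofFn]
      simp [List.ofFnNthVal, Nat.lt_of_succ_le hk]
    rw [hget]
    simp only [List.map_append, List.sum_append, Option.toList_some, List.map_cons,
      List.map_nil, List.sum_cons, List.sum_nil]
    rw [ih (by omega)]
    conv_rhs => rw [PB, Finset.sum_range_succ, ← PB]
    rw [idx_small hj (by omega : k < j)]
    omega

lemma sum_map_take_ofFn_snd (hj : 0 < j) (g : Fin j → ℕ × ℕ) :
    ∀ k, k ≤ j → (((List.ofFn g).take k).map Prod.snd).sum = PA hj g k := by
  intro k
  induction k with
  | zero => simp [PA]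
  | succ k ih =>
    intro hk
    rw [List.take_succ]
    have hget : (List.ofFn g)[k]? = some (g ⟨k, by omega⟩) := by
      rw [List.getElem?_ofFn]
      simp [List.ofFnNthVal, Nat.lt_of_succ_le hk]
    rw [hget]
    simp only [List.map_append, List.sum_append, Option.toList_some, List.map_cons,
      List.map_nil, List.sum_cons, List.sum_nil]
    rw [ih (by omega)]
    conv_rhs => rw [PA, Finset.sum_range_succ, ← PA]
    rw [idx_small hj (by omega : k < j)]
    omega

lemma bdryL_ofFn_iff (hj : 0 < j) (g : Fin j → ℕ × ℕ) :
    bdryL n m (List.ofFn g) ↔ dyckT n m hj g := by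
  constructor
  · intro h k hk
    have := h k
    rwa [sum_map_take_ofFn_fst hj g k hk, sum_map_take_ofFn_snd hj g k hk] at this
  · intro h k
    rcases le_or_gt k j with hk | hk
    · rw [sum_map_take_ofFn_fst hj g k hk, sum_map_take_ofFn_snd hj g k hk]
      exact h k hk
    · have hlen : (List.ofFn g).length ≤ k := by simp; omega
      rw [List.take_of_length_le hlen]
      have := h j le_rfl
      have hfull : (List.ofFn g).take j = List.ofFn g := by
        apply List.take_of_length_le
        simp
      rw [← hfull, sum_map_take_ofFn_fst hj g j le_rfl, sum_map_take_ofFn_snd hj g j le_rfl]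
      exact this

lemma SL_eq_image (hj : 0 < j) :
    SL n m j = List.ofFn '' (TDset n m hj) := by
  ext L
  simp only [SL, TDset, Set.mem_setOf_eq, Set.mem_image]
  constructor
  · rintro ⟨hpos, hlen, hm, hn, hb⟩
    set g : Fin j → ℕ × ℕ := fun i => L.get (Fin.cast hlen.symm i) with hg
    have hLg : List.ofFn g = L := by
      apply List.ext_getElem
      · simp [hlen]
      · intro i h1 h2
        simp [hg]
    refine ⟨g, ⟨⟨?_, ?_, ?_⟩, ?_⟩, hLg⟩
    · intro i
      apply hpos
      rw [← hLg]
      exact List.mem_ofFn.mpr ⟨i, rfl⟩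
    · rw [← hm, ← hLg, List.map_ofFn, List.sum_ofFn]; rfl
    · rw [← hn, ← hLg, List.map_ofFn, List.sum_ofFn]; rfl
    · rw [← bdryL_ofFn_iff hj, hLg]
      exact hb
  · rintro ⟨g, ⟨⟨hpos, hm, hn⟩, hd⟩, rfl⟩
    refine ⟨?_, by simp, ?_, ?_, (bdryL_ofFn_iff hj g).mpr hd⟩
    · intro x hx
      obtain ⟨i, rfl⟩ := List.mem_ofFn.mp hx
      exact hpos i
    · rw [List.map_ofFn, List.sum_ofFn]; exact hm
    · rw [List.map_ofFn, List.sum_ofFn]; exact hn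

lemma ncard_SL_eq (hj : 0 < j) : (SL n m j).ncard = (TDset n m hj).ncard := by
  rw [SL_eq_image (n := n) (m := m) hj]
  exact Set.ncard_image_of_injective _ List.ofFn_injective

end Bridge

section Count

lemma card_sum_eq (j N : ℕ) :
    Nat.card {f : Fin j → ℕ // ∑ i, f i = N} = (j + N - 1).choose N := by
  classical
  let E : (Fin j → ℕ) ≃ Multiset (Fin j) :=
    Finsupp.equivFunOnFinite.symm.trans Multiset.toFinsupp.symm.toEquiv
  have hcard : ∀ f : Fin j → ℕ, Multiset.card (E f) = ∑ i, f i := by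
    intro f
    show Multiset.card (Multiset.toFinsupp.symm.toEquiv (Finsupp.equivFunOnFinite.symm f)) = _
    rw [AddEquiv.toEquiv_eq_coe]
    simp only [EquivLike.coe_coe]
    rw [Multiset.toFinsupp_symm_apply, Finsupp.card_toMultiset,
      Finsupp.sum_fintype _ _ (fun _ => rfl)]
    simp
  have E2 : {f : Fin j → ℕ // ∑ i, f i = N} ≃ {s : Multiset (Fin j) // Multiset.card s = N} :=
    Equiv.subtypeEquiv E (fun f => by rw [hcard f])
  rw [Nat.card_congr E2]
  have : Nat.card {s : Multiset (Fin j) // Multiset.card s = N} = Nat.card (Sym (Fin j) N) := rfl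
  rw [this, Nat.card_eq_fintype_card, Sym.card_sym_eq_choose, Fintype.card_fin]

lemma card_pos_comp {j m : ℕ} (hj : 0 < j) (hm : 0 < m) :
    Nat.card {b : Fin j → ℕ // (∀ i, 0 < b i) ∧ ∑ i, b i = m} = (m - 1).choose (j - 1) := by
  rcases le_or_gt j m with hmj | hmj
  · have hsum1 : (∑ _i : Fin j, (1 : ℕ)) = j := by simp
    let E : {b : Fin j → ℕ // (∀ i, 0 < b i) ∧ ∑ i, b i = m} ≃
        {f : Fin j → ℕ // ∑ i, f i = m - j} :=
      { toFun := fun b => ⟨fun i => b.1 i - 1, by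
          have hpos := b.2.1
          have hsum := b.2.2
          have h1 : ∑ i, (b.1 i - 1 + 1) = m :=
            (Finset.sum_congr rfl (fun i _ => by have := hpos i; omega)).trans hsum
          rw [Finset.sum_add_distrib] at h1
          simp only [Finset.sum_const, Finset.card_univ, Fintype.card_fin, smul_eq_mul,
            Nat.mul_one] at h1
          show ∑ i, (b.1 i - 1) = m - j
          omega⟩
        invFun := fun f => ⟨fun i => f.1 i + 1, fun i => Nat.succ_pos _, by
          have hsum := f.2
          show ∑ i, (f.1 i + 1) = m
          rw [Finset.sum_add_distrib]
          simp only [Finset.sum_const, Finset.card_univ, Fintype.card_fin, smul_eq_mul,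
            Nat.mul_one]
          omega⟩
        left_inv := fun b => by
          apply Subtype.ext
          funext i
          have := b.2.1 i
          show b.1 i - 1 + 1 = b.1 i
          omega
        right_inv := fun f => by
          apply Subtype.ext
          funext i
          show f.1 i + 1 - 1 = f.1 i
          omega }
    rw [Nat.card_congr E, card_sum_eq]
    rw [show j + (m - j) - 1 = m - 1 by omega]
    rw [show m - j = (m - 1) - (j - 1) by omega, Nat.choose_symm (by omega)]
  · haveI : IsEmpty {b : Fin j → ℕ // (∀ i, 0 < b i) ∧ ∑ i, b i = m} := by
      constructor
      rintro ⟨b, hpos, hsum⟩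
      have h1 : (Finset.univ : Finset (Fin j)).card • (1 : ℕ) ≤ ∑ i, b i :=
        Finset.card_nsmul_le_sum _ _ _ (fun i _ => hpos i)
      simp only [Finset.card_univ, Fintype.card_fin, smul_eq_mul, Nat.mul_one] at h1
      omega
    rw [Nat.card_of_isEmpty, Nat.choose_eq_zero_of_lt (by omega)]

lemma card_TT {n m j : ℕ} (hj : 0 < j) (hm : 0 < m) (hn : 0 < n) :
    Nat.card (TTset m n j) = (m - 1).choose (j - 1) * (n - 1).choose (j - 1) := by
  have E : TTset m n j ≃ {b : Fin j → ℕ // (∀ i, 0 < b i) ∧ ∑ i, b i = m} ×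
      {a : Fin j → ℕ // (∀ i, 0 < a i) ∧ ∑ i, a i = n} :=
    { toFun := fun g => (⟨fun i => (g.1 i).1, fun i => (g.2.1 i).1, g.2.2.1⟩,
        ⟨fun i => (g.1 i).2, fun i => (g.2.1 i).2, g.2.2.2⟩)
      invFun := fun p => ⟨fun i => (p.1.1 i, p.2.1 i),
        ⟨fun i => ⟨p.1.2.1 i, p.2.2.1 i⟩, p.1.2.2, p.2.2.2⟩⟩
      left_inv := fun g => by
        apply Subtype.ext
        funext i
        rfl
      right_inv := fun p => by
        apply Prod.ext <;> apply Subtype.ext <;> rfl }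
  rw [Nat.card_congr E, Nat.card_prod, card_pos_comp hj hm, card_pos_comp hj hn]

end Count

/-- For `gcd(n,m) = 1`, the number of `(n,m)`-Dyck paths with exactly `j` peaks is
`(1/j)·C(n−1, j−1)·C(m−1, j−1)`: `j` times this number equals
`C(n−1, j−1)·C(m−1, j−1)`. -/
theorem stmt12 (n m j : ℕ) (hn : 0 < n) (hm : 0 < m) (hj : 0 < j)
    (h : Nat.gcd n m = 1) :
    j * {w : List Bool | IsDyckPath n m w ∧ numPeaks w = j}.ncard =
      (n - 1).choose (j - 1) * (m - 1).choose (j - 1) := by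
  rw [wset_ncard n m j hn hm, ncard_SL_eq hj, Nat.mul_comm, ← ncard_TT_eq hj h]
  rw [← Nat.card_coe_set_eq, card_TT hj hm hn, Nat.mul_comm]
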